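/- Let n ≥ 1 and let λ : [−1,1]^n → ℝ^n be defined by λ(0) = 0 and λ(x) = (‖x‖_∞/‖x‖)·x for x ≠ 0. Then λ is biLipschitz on [−1,1]^n with explicit constants: for all x, y ∈ [−1,1]^n, (1/(3(n+1)))·‖x − y‖ ≤ ‖λ(x) − λ(y)‖ ≤ 3·‖x − y‖, where ‖·‖ is the Euclidean norm. -/

import Mathlib

section
variable {n : ℕ} [Nonempty (Fin n)]

noncomputable def mnorm (x : EuclideanSpace ℝ (Fin n)) : ℝ := ⨆ i, |x i|

lemma coord_le_norm (x : EuclideanSpace ℝ (Fin n)) (i : Fin n) : |x i| ≤ ‖x‖ := by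
  rw [EuclideanSpace.norm_eq]
  have h1 : |x i| = Real.sqrt (‖x i‖ ^ 2) := by
    rw [Real.sqrt_sq_eq_abs]; simp [abs_abs]
  rw [h1]
  apply Real.sqrt_le_sqrt
  exact Finset.single_le_sum (f := fun j => ‖x j‖ ^ 2) (fun j _ => by positivity) (Finset.mem_univ i)

lemma mnorm_nonneg (x : EuclideanSpace ℝ (Fin n)) : 0 ≤ mnorm x := by
  obtain ⟨i⟩ := (inferInstance : Nonempty (Fin n))
  exact le_trans (abs_nonneg (x i))
    (le_ciSup (f := fun j => |x j|) (Set.Finite.bddAbove (Set.finite_range _)) i)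

lemma coord_le_mnorm (x : EuclideanSpace ℝ (Fin n)) (i : Fin n) : |x i| ≤ mnorm x :=
  le_ciSup (f := fun j => |x j|) (Set.Finite.bddAbove (Set.finite_range _)) i

lemma mnorm_le_norm (x : EuclideanSpace ℝ (Fin n)) : mnorm x ≤ ‖x‖ :=
  ciSup_le fun i => coord_le_norm x i

lemma norm_le_sqrt_mnorm (x : EuclideanSpace ℝ (Fin n)) : ‖x‖ ≤ Real.sqrt n * mnorm x := by
  rw [EuclideanSpace.norm_eq]
  have : ∑ i, ‖x i‖ ^ 2 ≤ (n : ℝ) * (mnorm x) ^ 2 := by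
    calc ∑ i, ‖x i‖ ^ 2 ≤ ∑ _i : Fin n, (mnorm x) ^ 2 := by
          apply Finset.sum_le_sum
          intro i _
          have := coord_le_mnorm x i
          have h0 := abs_nonneg (x i)
          nlinarith [Real.norm_eq_abs (x i)]
      _ = (n : ℝ) * (mnorm x) ^ 2 := by simp [Finset.sum_const]
  calc Real.sqrt (∑ i, ‖x i‖ ^ 2) ≤ Real.sqrt ((n : ℝ) * (mnorm x) ^ 2) := Real.sqrt_le_sqrt this
    _ = Real.sqrt n * mnorm x := by
        rw [Real.sqrt_mul (by positivity), Real.sqrt_sq (mnorm_nonneg x)]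

lemma mnorm_sub_le (x y : EuclideanSpace ℝ (Fin n)) : mnorm x - mnorm y ≤ ‖x - y‖ := by
  rw [sub_le_iff_le_add]
  apply ciSup_le
  intro i
  have h1 : |x i| ≤ |x i - y i| + |y i| := by
    have := abs_sub_abs_le_abs_sub (x i) (y i); linarith [abs_nonneg (x i - y i)]
  have h2 : |x i - y i| ≤ ‖x - y‖ := by
    have := coord_le_norm (x - y) i
    simpa using this
  have h3 := coord_le_mnorm y i
  linarith

lemma abs_mnorm_sub_le (x y : EuclideanSpace ℝ (Fin n)) : |mnorm x - mnorm y| ≤ ‖x - y‖ := by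
  rw [abs_sub_le_iff]
  constructor
  · exact mnorm_sub_le x y
  · rw [← norm_neg, neg_sub]; exact mnorm_sub_le y x

lemma mnorm_pos (x : EuclideanSpace ℝ (Fin n)) (hx : x ≠ 0) : 0 < mnorm x := by
  have : ∃ i, x i ≠ 0 := by
    by_contra h
    push_neg at h
    exact hx (PiLp.ext fun i => by simp [h i])
  obtain ⟨i, hi⟩ := this
  exact lt_of_lt_of_le (abs_pos.mpr hi) (coord_le_mnorm x i)

/-- The abstract key estimate. -/
lemma key_est {E : Type*} [NormedAddCommGroup E] [NormedSpace ℝ E]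
    (z w : E) (pz pw qz qw K M : ℝ)
    (hqz : 0 < qz) (hqw : 0 < qw) (hpz : 0 ≤ pz) (hpw : 0 ≤ pw)
    (hKz : pz ≤ K * qz) (hKw : pw ≤ K * qw)
    (hLp : |pz - pw| ≤ ‖z - w‖) (hLq : |qz - qw| ≤ ‖z - w‖)
    (hM : ‖w‖ ≤ M * qz) (hM0 : 0 ≤ M) :
    ‖(pz / qz) • z - (pw / qw) • w‖ ≤ (K + (1 + K) * M) * ‖z - w‖ := by
  have hK0 : 0 ≤ K := by
    have := hKz
    nlinarith
  have key : (pz / qz) • z - (pw / qw) • w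
      = (pz / qz) • (z - w) + (pz / qz - pw / qw) • w := by
    rw [smul_sub, sub_smul]; abel
  rw [key]
  have h1 : ‖(pz / qz) • (z - w)‖ ≤ K * ‖z - w‖ := by
    rw [norm_smul, Real.norm_eq_abs, abs_of_nonneg (by positivity)]
    apply mul_le_mul_of_nonneg_right _ (norm_nonneg _)
    rw [div_le_iff₀ hqz]; exact hKz
  have h2 : |pz / qz - pw / qw| ≤ (1 + K) * ‖z - w‖ / qz := by
    have heq : pz / qz - pw / qw = (pz * qw - pw * qz) / (qz * qw) := by
      field_simp
    rw [heq, abs_div, abs_of_pos (mul_pos hqz hqw)]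
    rw [div_le_div_iff₀ (mul_pos hqz hqw) hqz]
    have hnum : |pz * qw - pw * qz| ≤ (1 + K) * ‖z - w‖ * qw := by
      have hsplit : pz * qw - pw * qz = (pz - pw) * qw + pw * (qw - qz) := by ring
      calc |pz * qw - pw * qz| ≤ |(pz - pw) * qw| + |pw * (qw - qz)| := by
            rw [hsplit]; exact abs_add_le _ _
        _ = |pz - pw| * qw + pw * |qw - qz| := by
            rw [abs_mul, abs_mul, abs_of_pos hqw, abs_of_nonneg hpw]
        _ ≤ ‖z - w‖ * qw + (K * qw) * ‖z - w‖ := by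
            have h1' : |qw - qz| ≤ ‖z - w‖ := by rw [abs_sub_comm]; exact hLq
            have := mul_le_mul hLp (le_refl qw) hqw.le (norm_nonneg _)
            have h2' : pw * |qw - qz| ≤ (K * qw) * ‖z - w‖ :=
              mul_le_mul hKw h1' (abs_nonneg _) (by positivity)
            linarith
        _ = (1 + K) * ‖z - w‖ * qw := by ring
    calc |pz * qw - pw * qz| * qz ≤ ((1 + K) * ‖z - w‖ * qw) * qz :=
          mul_le_mul_of_nonneg_right hnum hqz.le
      _ = (1 + K) * ‖z - w‖ * (qz * qw) := by ring
  have h3 : ‖(pz / qz - pw / qw) • w‖ ≤ (1 + K) * M * ‖z - w‖ := by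
    rw [norm_smul, Real.norm_eq_abs]
    calc |pz / qz - pw / qw| * ‖w‖ ≤ ((1 + K) * ‖z - w‖ / qz) * (M * qz) :=
          mul_le_mul h2 hM (norm_nonneg _) (by positivity)
      _ = (1 + K) * M * ‖z - w‖ := by field_simp
  calc ‖(pz / qz) • (z - w) + (pz / qz - pw / qw) • w‖
      ≤ ‖(pz / qz) • (z - w)‖ + ‖(pz / qz - pw / qw) • w‖ := norm_add_le _ _
    _ ≤ K * ‖z - w‖ + (1 + K) * M * ‖z - w‖ := add_le_add h1 h3
    _ = (K + (1 + K) * M) * ‖z - w‖ := by ring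

end

section
variable {n : ℕ} [Nonempty (Fin n)]

lemma mnorm_smul (c : ℝ) (hc : 0 ≤ c) (x : EuclideanSpace ℝ (Fin n)) :
    mnorm (c • x) = c * mnorm x := by
  have happ : ∀ i, (c • x) i = c * x i := fun i => rfl
  apply le_antisymm
  · apply ciSup_le
    intro i
    rw [happ, abs_mul, abs_of_nonneg hc]
    exact mul_le_mul_of_nonneg_left (coord_le_mnorm x i) hc
  · rcases eq_or_lt_of_le hc with h | h
    · simp [← h, mnorm_nonneg]
    · rw [← le_div_iff₀' h]
      apply ciSup_le
      intro i
      have heq : |x i| = |(c • x) i| / c := by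
        rw [happ, abs_mul, abs_of_pos h, mul_div_cancel_left₀ _ (ne_of_gt h)]
      rw [heq]
      gcongr
      exact coord_le_mnorm (c • x) i

end

theorem cube_to_ball_map_biLipschitz
    (n : ℕ) (hn : 1 ≤ n)
    (lam : EuclideanSpace ℝ (Fin n) → EuclideanSpace ℝ (Fin n))
    (hlam0 : lam 0 = 0)
    (hlam : ∀ x : EuclideanSpace ℝ (Fin n), x ≠ 0 → lam x = ((⨆ i, |x i|) / ‖x‖) • x) :
    ∀ x ∈ {x : EuclideanSpace ℝ (Fin n) | ∀ i, |x i| ≤ 1},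
      ∀ y ∈ {x : EuclideanSpace ℝ (Fin n) | ∀ i, |x i| ≤ 1},
        (1 / (3 * (n + 1) : ℝ)) * ‖x - y‖ ≤ ‖lam x - lam y‖ ∧
        ‖lam x - lam y‖ ≤ 3 * ‖x - y‖ := by
  haveI : Nonempty (Fin n) := ⟨⟨0, hn⟩⟩
  have hlam' : ∀ a : EuclideanSpace ℝ (Fin n), a ≠ 0 → lam a = (mnorm a / ‖a‖) • a :=
    fun a ha => hlam a ha
  have hnormlam : ∀ a : EuclideanSpace ℝ (Fin n), a ≠ 0 → ‖lam a‖ = mnorm a := by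
    intro a ha
    rw [hlam' a ha, norm_smul, Real.norm_eq_abs,
      abs_of_nonneg (div_nonneg (mnorm_nonneg a) (norm_nonneg a)),
      div_mul_cancel₀ _ (norm_ne_zero_iff.mpr ha)]
  have hmlam : ∀ a : EuclideanSpace ℝ (Fin n), a ≠ 0 →
      mnorm (lam a) = (mnorm a / ‖a‖) * mnorm a := by
    intro a ha
    rw [hlam' a ha, mnorm_smul _ (div_nonneg (mnorm_nonneg a) (norm_nonneg a))]
  have hsqrt_le : Real.sqrt n ≤ 3 * (n + 1) := by
    have h := Real.sqrt_le_sqrt (show (n : ℝ) ≤ (3 * (n + 1)) ^ 2 by nlinarith [Nat.cast_nonneg (α := ℝ) n])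
    rwa [Real.sqrt_sq (by positivity)] at h
  have hconst : Real.sqrt n + (1 + Real.sqrt n) * Real.sqrt n ≤ 3 * (n + 1) := by
    nlinarith [Real.sq_sqrt (Nat.cast_nonneg (α := ℝ) n), Real.sqrt_nonneg n,
      sq_nonneg (Real.sqrt n - 1)]
  -- upper bound, assuming ‖b‖ ≤ ‖a‖
  have upper : ∀ a b : EuclideanSpace ℝ (Fin n), ‖b‖ ≤ ‖a‖ →
      ‖lam a - lam b‖ ≤ 3 * ‖a - b‖ := by
    intro a b hba
    by_cases hb : b = 0
    · subst hb
      rw [hlam0, sub_zero, sub_zero]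
      by_cases ha : a = 0
      · simp [ha, hlam0]
      · rw [hnormlam a ha]
        have := mnorm_le_norm a
        have := norm_nonneg a
        linarith
    · have hbpos : (0:ℝ) < ‖b‖ := norm_pos_iff.mpr hb
      have hapos : (0:ℝ) < ‖a‖ := lt_of_lt_of_le hbpos hba
      have ha : a ≠ 0 := norm_pos_iff.mp hapos
      rw [hlam' a ha, hlam' b hb]
      have key := key_est a b (mnorm a) (mnorm b) ‖a‖ ‖b‖ 1 1 hapos hbpos
        (mnorm_nonneg a) (mnorm_nonneg b)
        (by simpa using mnorm_le_norm a) (by simpa using mnorm_le_norm b)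
        (abs_mnorm_sub_le a b) (abs_norm_sub_norm_le a b)
        (by simpa using hba) zero_le_one
      calc ‖(mnorm a / ‖a‖) • a - (mnorm b / ‖b‖) • b‖
          ≤ (1 + (1 + 1) * 1) * ‖a - b‖ := key
        _ = 3 * ‖a - b‖ := by ring
  -- lower bound, assuming mnorm (lam b) ≤ mnorm (lam a), a b ≠ 0
  have lower : ∀ a b : EuclideanSpace ℝ (Fin n), a ≠ 0 → b ≠ 0 →
      mnorm (lam b) ≤ mnorm (lam a) →
      ‖a - b‖ ≤ (3 * (n + 1) : ℝ) * ‖lam a - lam b‖ := by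
    intro a b ha hb hm
    set z := lam a with hz
    set w := lam b with hw
    have hma : 0 < mnorm a := mnorm_pos a ha
    have hmb : 0 < mnorm b := mnorm_pos b hb
    have hapos : (0:ℝ) < ‖a‖ := norm_pos_iff.mpr ha
    have hbpos : (0:ℝ) < ‖b‖ := norm_pos_iff.mpr hb
    have hmz : mnorm z = (mnorm a / ‖a‖) * mnorm a := hmlam a ha
    have hmw : mnorm w = (mnorm b / ‖b‖) * mnorm b := hmlam b hb
    have hmzpos : 0 < mnorm z := by rw [hmz]; positivity
    have hmwpos : 0 < mnorm w := by rw [hmw]; positivity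
    have hnz : ‖z‖ = mnorm a := hnormlam a ha
    have hnw : ‖w‖ = mnorm b := hnormlam b hb
    have hMz : ‖z‖ ≤ Real.sqrt n * mnorm z := norm_le_sqrt_mnorm z
    have hMw : ‖w‖ ≤ Real.sqrt n * mnorm w := norm_le_sqrt_mnorm w
    have hM : ‖w‖ ≤ Real.sqrt n * mnorm z :=
      le_trans hMw (mul_le_mul_of_nonneg_left hm (Real.sqrt_nonneg n))
    have key := key_est z w ‖z‖ ‖w‖ (mnorm z) (mnorm w) (Real.sqrt n) (Real.sqrt n)
      hmzpos hmwpos (norm_nonneg z) (norm_nonneg w)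
      hMz hMw (abs_norm_sub_norm_le z w) (abs_mnorm_sub_le z w)
      hM (Real.sqrt_nonneg n)
    have hza : (‖z‖ / mnorm z) • z = a := by
      rw [hlam' a ha] at hz
      rw [hnz, hmz, hz, smul_smul]
      rw [show mnorm a / (mnorm a / ‖a‖ * mnorm a) * (mnorm a / ‖a‖) = 1 by
        field_simp]
      simp
    have hwb : (‖w‖ / mnorm w) • w = b := by
      rw [hlam' b hb] at hw
      rw [hnw, hmw, hw, smul_smul]
      rw [show mnorm b / (mnorm b / ‖b‖ * mnorm b) * (mnorm b / ‖b‖) = 1 by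
        field_simp]
      simp
    rw [hza, hwb] at key
    calc ‖a - b‖ ≤ (Real.sqrt n + (1 + Real.sqrt n) * Real.sqrt n) * ‖z - w‖ := key
      _ ≤ (3 * (n + 1) : ℝ) * ‖z - w‖ :=
          mul_le_mul_of_nonneg_right hconst (norm_nonneg _)
  -- lower bound, all cases
  have lower' : ∀ a b : EuclideanSpace ℝ (Fin n),
      ‖a - b‖ ≤ (3 * (n + 1) : ℝ) * ‖lam a - lam b‖ := by
    intro a b
    by_cases ha : a = 0
    · subst ha
      by_cases hb : b = 0
      · simp [hb, hlam0]
      · rw [hlam0, zero_sub, zero_sub, norm_neg, norm_neg, hnormlam b hb]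
        calc ‖b‖ ≤ Real.sqrt n * mnorm b := norm_le_sqrt_mnorm b
          _ ≤ (3 * (n + 1) : ℝ) * mnorm b :=
              mul_le_mul_of_nonneg_right hsqrt_le (mnorm_nonneg b)
    · by_cases hb : b = 0
      · rw [hb, hlam0, sub_zero, sub_zero, hnormlam a ha]
        calc ‖a‖ ≤ Real.sqrt n * mnorm a := norm_le_sqrt_mnorm a
          _ ≤ (3 * (n + 1) : ℝ) * mnorm a :=
              mul_le_mul_of_nonneg_right hsqrt_le (mnorm_nonneg a)
      · rcases le_total (mnorm (lam b)) (mnorm (lam a)) with h | h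
        · exact lower a b ha hb h
        · rw [norm_sub_rev, norm_sub_rev (lam a)]
          exact lower b a hb ha h
  intro x _ y _
  constructor
  · have h := lower' x y
    have hD : (0:ℝ) < 3 * (n + 1) := by positivity
    rw [div_mul_eq_mul_div, div_le_iff₀ hD, mul_comm ‖lam x - lam y‖]
    linarith
  · rcases le_total ‖y‖ ‖x‖ with h | h
    · exact upper x y h
    · rw [norm_sub_rev, norm_sub_rev x]
      exact upper y x h
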